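/- Let (𝒟, F) be a Markov IFS, let A = ⋃_j A_j ⊂ 𝒟 be an attracting region with respect to a relatively repelling region R, with A ⊂ Int(R), and suppose each connected component A_j is a C¹ disc. Then the family of restrictions {f_i|_{A_j} : f_i ∈ F, A_j ⊂ D_{dom(i)}, f_i(A_j) ⊂ R} defines a Markov IFS with discs {A_j}: each such restriction maps its domain disc into the interior of some A_{j'}, and the images of distinct restrictions are pairwise disjoint. -/

import Mathlib

open Set

/-- A Markov iterated function system on finitely many pairwise disjoint compact discs
in the plane: finitely many `C¹` local diffeomorphisms, each sending its domain disc
into the interior of its target disc, with pairwise disjoint images. -/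
structure MarkovIFS (m k : ℕ) where
  D : Fin m → Set (ℝ × ℝ)
  f : Fin k → (ℝ × ℝ) → (ℝ × ℝ)
  dom : Fin k → Fin m
  tgt : Fin k → Fin m
  compact : ∀ i, IsCompact (D i)
  nonemptyDiscs : ∀ i, (D i).Nonempty
  disjointDiscs : ∀ i j, i ≠ j → Disjoint (D i) (D j)
  smooth : ∀ j, ContDiffOn ℝ 1 (f j) (D (dom j))
  inj : ∀ j, Set.InjOn (f j) (D (dom j))
  mapsInto : ∀ j, f j '' D (dom j) ⊆ interior (D (tgt j))
  disjointImages : ∀ j j', j ≠ j' → Disjoint (f j '' D (dom j)) (f j' '' D (dom j'))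

namespace MarkovIFS

variable {m k : ℕ} (M : MarkovIFS m k)

/-- The union `𝒟` of the discs of the Markov IFS. -/
def union : Set (ℝ × ℝ) := ⋃ i, M.D i

/-- Admissibility relation on letters: the image of `f a` is contained in the domain disc of `f b`. -/
def AdmRel (a b : Fin k) : Prop := M.f a '' M.D (M.dom a) ⊆ M.D (M.dom b)

/-- A word is admissible if consecutive letters satisfy the admissibility relation. -/
def Admissible (ω : List (Fin k)) : Prop := ω.Chain' M.AdmRel

/-- The composition `F_ω = f_{j_n} ∘ ⋯ ∘ f_{j_1}` associated to the word `ω = j₁⋯j_n`. -/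
def Fword (ω : List (Fin k)) : (ℝ × ℝ) → (ℝ × ℝ) := ω.foldl (fun g j => M.f j ∘ g) id

/-- Membership in the domain appropriate for applying the word `ω`. -/
def inDom : List (Fin k) → (ℝ × ℝ) → Prop
  | [], x => x ∈ M.union
  | j :: _, x => x ∈ M.D (M.dom j)

/-- `p` is fixed by the nonempty admissible word `ω`. -/
def FixWord (p : ℝ × ℝ) (ω : List (Fin k)) : Prop :=
  ω ≠ [] ∧ M.Admissible ω ∧ M.inDom ω p ∧ M.Fword ω p = p

/-- `p` is a periodic point of period `n`: `n` is the least length of a nonempty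
admissible word fixing `p`. -/
def HasPeriod (p : ℝ × ℝ) (n : ℕ) : Prop :=
  (∃ ω, M.FixWord p ω ∧ ω.length = n) ∧ ∀ ω, M.FixWord p ω → n ≤ ω.length

/-- `F^n(𝒟)`, the union of the images of the discs under all admissible words of length `n`. -/
def imageN (n : ℕ) : Set (ℝ × ℝ) :=
  {y | ∃ ω x, M.Admissible ω ∧ ω.length = n ∧ M.inDom ω x ∧ M.Fword ω x = y}

/-- `F^{-n}(S)`: the set of points sent into `S` by some admissible word of length `n`
(the image of `S ∩ F^n(𝒟)` under the well-defined inverse `F^{-n}`). -/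
def preImageN (n : ℕ) (S : Set (ℝ × ℝ)) : Set (ℝ × ℝ) :=
  {x | ∃ ω, M.Admissible ω ∧ ω.length = n ∧ M.inDom ω x ∧ M.Fword ω x ∈ S}

end MarkovIFS

/-- The interior of `R` relative to the subspace `U`. -/
def relIntIn (U R : Set (ℝ × ℝ)) : Set (ℝ × ℝ) :=
  {x | x ∈ U ∧ ∃ ε > 0, Metric.ball x ε ∩ U ⊆ R}

namespace MarkovIFS

variable {m k : ℕ} (M : MarkovIFS m k)

/-- A compact set `R ⊆ 𝒟` is a relatively repelling region if
`F^{-1}(R ∩ F(𝒟)) ⊆ Int_t(R)`, interior relative to the topology of `𝒟`. -/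
def RelRepelling (R : Set (ℝ × ℝ)) : Prop :=
  IsCompact R ∧ R ⊆ M.union ∧ M.preImageN 1 (R ∩ M.imageN 1) ⊆ relIntIn M.union R

end MarkovIFS

/-- Let `A = ⋃ A_j` be an attracting region with respect to a
relatively repelling region `R`, with `A ⊆ Int(R)`, whose components `A_j` are
nonempty disjoint compact connected discs. Then the restrictions `f_i|_{A_j}` with
`f_i(A_j) ⊆ R` define a Markov IFS with discs `{A_j}`: each such restriction maps its
disc into the interior of some `A_{j'}`, and images of distinct restrictions are
pairwise disjoint. -/
theorem markovIFS_attracting_region_is_IFS {m k : ℕ} (M : MarkovIFS m k)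
    (R : Set (ℝ × ℝ)) (hR : M.RelRepelling R)
    (l : ℕ) (A : Fin l → Set (ℝ × ℝ))
    (hAcpt : ∀ j, IsCompact (A j)) (hAne : ∀ j, (A j).Nonempty)
    (hAconn : ∀ j, IsConnected (A j))
    (hAdisj : ∀ j j', j ≠ j' → Disjoint (A j) (A j'))
    (hAintR : (⋃ j, A j) ⊆ relIntIn M.union R)
    (hattr : ∀ (i : Fin k) (j : Fin l), A j ⊆ M.D (M.dom i) →
      M.f i '' A j ⊆ interior (⋃ j', A j') ∨ (M.f i '' A j) ∩ R = ∅) :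
    (∀ (i : Fin k) (j : Fin l), A j ⊆ M.D (M.dom i) → M.f i '' A j ⊆ R →
      ∃ j', M.f i '' A j ⊆ interior (A j')) ∧
    (∀ (i i' : Fin k) (j j' : Fin l),
      A j ⊆ M.D (M.dom i) → A j' ⊆ M.D (M.dom i') →
      M.f i '' A j ⊆ R → M.f i' '' A j' ⊆ R → (i, j) ≠ (i', j') →
      Disjoint (M.f i '' A j) (M.f i' '' A j')) := by
  have key : ∀ x, x ∈ interior (⋃ j', A j') → ∃ j', x ∈ interior (A j') := by
    intro x hx
    obtain ⟨j0, hj0⟩ := mem_iUnion.1 (interior_subset hx)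
    refine ⟨j0, ?_⟩
    have hclosed : IsClosed (⋃ j' ∈ {j' : Fin l | j' ≠ j0}, A j') :=
      (Set.toFinite _).isClosed_biUnion (fun j' _ => (hAcpt j').isClosed)
    have hUopen : IsOpen (interior (⋃ j', A j') \ ⋃ j' ∈ {j' : Fin l | j' ≠ j0}, A j') :=
      isOpen_interior.sdiff hclosed
    have hUsub : interior (⋃ j', A j') \ (⋃ j' ∈ {j' : Fin l | j' ≠ j0}, A j') ⊆ A j0 := by
      intro y hy
      obtain ⟨j1, hj1⟩ := mem_iUnion.1 (interior_subset hy.1)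
      by_cases h : j1 = j0
      · exact h ▸ hj1
      · exact absurd (mem_iUnion₂.2 ⟨j1, h, hj1⟩) hy.2
    refine interior_maximal hUsub hUopen ⟨hx, ?_⟩
    intro hmem
    obtain ⟨j1, hj1, hxj1⟩ := mem_iUnion₂.1 hmem
    exact (hAdisj j1 j0 hj1).le_bot ⟨hxj1, hj0⟩
  have part1 : ∀ (i : Fin k) (j : Fin l), A j ⊆ M.D (M.dom i) → M.f i '' A j ⊆ R →
      ∃ j', M.f i '' A j ⊆ interior (A j') := by
    intro i j hsub hRsub
    have hconn : IsConnected (M.f i '' A j) :=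
      (hAconn j).image _ (((M.smooth i).continuousOn).mono hsub)
    have hne : (M.f i '' A j).Nonempty := hconn.nonempty
    have hint : M.f i '' A j ⊆ interior (⋃ j', A j') := by
      rcases hattr i j hsub with h | h
      · exact h
      · obtain ⟨y, hy⟩ := hne
        exact absurd h (Set.Nonempty.ne_empty ⟨y, hy, hRsub hy⟩)
    obtain ⟨y, hy⟩ := hne
    obtain ⟨j0, hj0⟩ := key y (hint hy)
    refine ⟨j0, ?_⟩
    have hUV : Disjoint (interior (A j0)) (⋃ j' ∈ {j' : Fin l | j' ≠ j0}, interior (A j')) := by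
      rw [Set.disjoint_left]
      intro z hz hz'
      obtain ⟨j1, hj1, hzj1⟩ := mem_iUnion₂.1 hz'
      exact (hAdisj j0 j1 (Ne.symm hj1)).le_bot ⟨interior_subset hz, interior_subset hzj1⟩
    have hVopen : IsOpen (⋃ j' ∈ {j' : Fin l | j' ≠ j0}, interior (A j')) :=
      isOpen_biUnion (fun _ _ => isOpen_interior)
    have hcover : M.f i '' A j ⊆ interior (A j0) ∪ ⋃ j' ∈ {j' : Fin l | j' ≠ j0}, interior (A j') := by
      intro z hz
      obtain ⟨j1, hj1⟩ := key z (hint hz)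
      by_cases h : j1 = j0
      · exact Or.inl (h ▸ hj1)
      · exact Or.inr (mem_iUnion₂.2 ⟨j1, h, hj1⟩)
    rcases hconn.isPreconnected.subset_or_subset isOpen_interior hVopen hUV hcover with h | h
    · exact h
    · exact absurd (h hy) (Set.disjoint_left.1 hUV hj0)
  refine ⟨part1, ?_⟩
  intro i i' j j' hsub hsub' _ _ hne
  by_cases hii : i = i'
  · subst hii
    have hjj : j ≠ j' := fun h => hne (by rw [h])
    exact (hAdisj j j' hjj).image (M.inj i) hsub hsub'
  · exact (M.disjointImages i i' hii).mono (image_mono hsub) (image_mono hsub')
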